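/- For every n ≥ 2, every tuning parameter η_n > 0 and every nonnegative real number a_n, the infimal coverage probability of the interval E_{S,n} = [θ̃_S − σ̂ a_n, θ̃_S + σ̂ a_n] satisfies inf_{θ∈ℝ} P_{n,θ}(θ ∈ E_{S,n}) = T_{n−1}(n^{1/2}(a_n − η_n)) − T_{n−1}(n^{1/2}(−a_n − η_n)), where T_{n−1} denotes the cumulative distribution function of the Student t-distribution with n − 1 degrees of freedom, which satisfies T_{n−1}(x) = ∫₀^∞ Φ(s x) h_n(s) ds with h_n the density of the square root of a chi-square random variable with n − 1 degrees of freedom divided by n − 1. -/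

import Mathlib

open MeasureTheory ProbabilityTheory Filter
open scoped NNReal

/-- Standard normal cumulative distribution function Φ. -/
noncomputable def stdNormCDF (x : ℝ) : ℝ :=
  ((gaussianReal 0 1) (Set.Iic x)).toReal

/-- Soft-thresholding (LASSO) estimator with threshold η, as a function of ȳ. -/
noncomputable def softThresh (η y : ℝ) : ℝ := Real.sign y * max (|y| - η) 0

/-- Hard-thresholding estimator with threshold η, as a function of ȳ. -/
noncomputable def hardThresh (η y : ℝ) : ℝ := if η < |y| then y else 0

/-- Adaptive LASSO estimator with tuning parameter η, as a function of ȳ. -/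
noncomputable def adaLasso (η y : ℝ) : ℝ := if |y| ≤ η then 0 else y - η ^ 2 / y

/-- Coverage probability `P_{n,θ}(θ ∈ [est(ȳ) - a, est(ȳ) + b])` in the
known-variance case (σ = 1), where ȳ ~ N(θ, 1/n). -/
noncomputable def cover (n : ℕ) (est : ℝ → ℝ) (a b θ : ℝ) : ℝ :=
  ((gaussianReal θ ((n : ℝ≥0))⁻¹)
    {y : ℝ | est y - a ≤ θ ∧ θ ≤ est y + b}).toReal

/-- The distribution of `σ̂ = sqrt(Q/(n-1))` where `Q ~ χ²_{n-1}`; i.e. the law of the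
square root of a chi-square random variable with `n-1` degrees of freedom divided by
`n - 1` (whose density is `h_n`). The chi-square distribution with `k` degrees of
freedom is the Gamma distribution with shape `k/2` and rate `1/2`. -/
noncomputable def sigmaHatLaw (n : ℕ) : Measure ℝ :=
  (gammaMeasure (((n : ℝ) - 1) / 2) (1 / 2)).map
    (fun q => Real.sqrt (q / ((n : ℝ) - 1)))

/-- The cumulative distribution function `T_{n-1}` of the Student t-distribution with
`n-1` degrees of freedom, via `T_{n-1}(x) = ∫₀^∞ Φ(s x) h_n(s) ds`. -/
noncomputable def studentCDF (n : ℕ) (x : ℝ) : ℝ :=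
  ∫ s, stdNormCDF (s * x) ∂(sigmaHatLaw n)

/-- Coverage probability `P_{n,θ}(θ ∈ [est(σ̂, ȳ) - σ̂ a, est(σ̂, ȳ) + σ̂ a])` in the
unknown-variance case (true σ = 1): `ȳ ~ N(θ, 1/n)` and `σ̂` (independent of `ȳ`) has
law `sigmaHatLaw n`; here `est s y` is the feasible estimator computed from `ȳ = y` and
`σ̂ = s`. -/
noncomputable def coverUV (n : ℕ) (est : ℝ → ℝ → ℝ) (a θ : ℝ) : ℝ :=
  (((gaussianReal θ ((n : ℝ≥0))⁻¹).prod (sigmaHatLaw n))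
    {p : ℝ × ℝ | est p.2 p.1 - p.2 * a ≤ θ ∧ θ ≤ est p.2 p.1 + p.2 * a}).toReal


open scoped ENNReal Topology


section helpers

lemma measurable_real_sign : Measurable Real.sign := by
  have h : Real.sign = fun r : ℝ => if r < 0 then (-1 : ℝ) else if 0 < r then 1 else 0 := by
    funext r; rfl
  rw [h]
  exact Measurable.ite (measurableSet_lt measurable_id measurable_const)
    measurable_const
    (Measurable.ite (measurableSet_lt measurable_const measurable_id)
      measurable_const measurable_const)

lemma softThresh_le_iff {t c y : ℝ} (ht : 0 ≤ t) (hc : 0 ≤ c) :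
    softThresh t y ≤ c ↔ y ≤ c + t := by
  unfold softThresh
  rcases lt_trichotomy y 0 with h | h | h
  · rw [Real.sign_of_neg h]
    constructor
    · intro _; linarith
    · intro _; nlinarith [le_max_right (|y| - t) (0:ℝ)]
  · subst h; rw [Real.sign_zero]
    constructor <;> intro <;> linarith
  · rw [Real.sign_of_pos h, abs_of_pos h, one_mul, max_le_iff]
    constructor
    · rintro ⟨h1, _⟩; linarith
    · intro h1; exact ⟨by linarith, hc⟩

lemma softThresh_le_iff_neg {t c y : ℝ} (ht : 0 ≤ t) (hc : c < 0) :
    softThresh t y ≤ c ↔ y ≤ c - t := by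
  unfold softThresh
  rcases lt_trichotomy y 0 with h | h | h
  · rw [Real.sign_of_neg h, abs_of_neg h]
    rcases le_or_gt (-y - t) 0 with hm | hm
    · rw [max_eq_right hm]
      constructor <;> intro <;> linarith
    · rw [max_eq_left hm.le]
      constructor <;> intro <;> linarith
  · subst h; rw [Real.sign_zero]
    constructor <;> intro <;> linarith
  · rw [Real.sign_of_pos h, abs_of_pos h, one_mul]
    constructor
    · intro h1; nlinarith [le_max_right (y - t) (0:ℝ)]
    · intro h1; linarith

lemma le_softThresh_iff {t c y : ℝ} (ht : 0 ≤ t) (hc : c ≤ 0) :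
    c ≤ softThresh t y ↔ c - t ≤ y := by
  unfold softThresh
  rcases lt_trichotomy y 0 with h | h | h
  · rw [Real.sign_of_neg h, abs_of_neg h]
    rcases le_or_gt (-y - t) 0 with hm | hm
    · rw [max_eq_right hm]
      constructor <;> intro <;> linarith
    · rw [max_eq_left hm.le]
      constructor <;> intro <;> linarith
  · subst h; rw [Real.sign_zero]
    constructor <;> intro <;> linarith
  · rw [Real.sign_of_pos h, abs_of_pos h, one_mul]
    constructor
    · intro _; linarith
    · intro _; nlinarith [le_max_right (y - t) (0:ℝ)]

lemma le_softThresh_iff_pos {t c y : ℝ} (ht : 0 ≤ t) (hc : 0 < c) :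
    c ≤ softThresh t y ↔ c + t ≤ y := by
  unfold softThresh
  rcases lt_trichotomy y 0 with h | h | h
  · rw [Real.sign_of_neg h]
    constructor
    · intro h1; nlinarith [le_max_right (|y| - t) (0:ℝ)]
    · intro h1; linarith
  · subst h; rw [Real.sign_zero]
    constructor <;> intro <;> linarith
  · rw [Real.sign_of_pos h, abs_of_pos h, one_mul, le_max_iff]
    constructor
    · rintro (h1 | h1) <;> linarith
    · intro h1; left; linarith

lemma sect_eq {η a : ℝ} (hη : 0 < η) (ha : 0 ≤ a) {s : ℝ} (hs : 0 ≤ s) (θ : ℝ) :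
    {y : ℝ | softThresh (s * η) y - s * a ≤ θ ∧ θ ≤ softThresh (s * η) y + s * a} =
      Set.Icc (if s * a < θ then θ - s * a + s * η else θ - s * a - s * η)
        (if θ < -(s * a) then θ + s * a - s * η else θ + s * a + s * η) := by
  have ht : 0 ≤ s * η := mul_nonneg hs hη.le
  ext y
  simp only [Set.mem_setOf_eq, Set.mem_Icc]
  have h1 : (softThresh (s * η) y - s * a ≤ θ) ↔
      (y ≤ if θ < -(s * a) then θ + s * a - s * η else θ + s * a + s * η) := by
    rw [sub_le_iff_le_add]
    by_cases hb : θ < -(s * a)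
    · rw [if_pos hb, softThresh_le_iff_neg ht (by linarith)]
    · rw [if_neg hb, softThresh_le_iff ht (by push_neg at hb; linarith)]
  have h2 : (θ ≤ softThresh (s * η) y + s * a) ↔
      ((if s * a < θ then θ - s * a + s * η else θ - s * a - s * η) ≤ y) := by
    rw [← sub_le_iff_le_add]
    by_cases hb : s * a < θ
    · rw [if_pos hb, le_softThresh_iff_pos ht (by linarith)]
    · rw [if_neg hb, le_softThresh_iff ht (by push_neg at hb; linarith)]
  rw [h1, h2]
  tauto

end helpers



section gauss

lemma stdNormCDF_mono : Monotone stdNormCDF := fun x y h =>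
  ENNReal.toReal_mono (measure_ne_top _ _) (measure_mono (Set.Iic_subset_Iic.2 h))

lemma measurable_stdNormCDF : Measurable stdNormCDF := stdNormCDF_mono.measurable

lemma stdNormCDF_nonneg (x : ℝ) : 0 ≤ stdNormCDF x := ENNReal.toReal_nonneg

lemma stdNormCDF_le_one (x : ℝ) : stdNormCDF x ≤ 1 := by
  have h : gaussianReal 0 1 (Set.Iic x) ≤ 1 := prob_le_one
  calc stdNormCDF x ≤ (1 : ℝ≥0∞).toReal := ENNReal.toReal_mono (by simp) h
    _ = 1 := by simp

lemma gaussianReal_singleton (m x : ℝ) {v : ℝ≥0} (hv : v ≠ 0) :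
    gaussianReal m v {x} = 0 :=
  gaussianReal_absolutelyContinuous m hv (measure_singleton x)

lemma gaussianReal_Iio (m x : ℝ) {v : ℝ≥0} (hv : v ≠ 0) :
    gaussianReal m v (Set.Iio x) = gaussianReal m v (Set.Iic x) := by
  rw [← Set.Iio_union_right, measure_union (by simp) (measurableSet_singleton x),
    gaussianReal_singleton m x hv, add_zero]

lemma gaussianReal_eq_map (n : ℕ) (hn : 0 < n) (θ : ℝ) :
    gaussianReal θ ((n : ℝ≥0))⁻¹ =
      ((gaussianReal 0 1).map ((Real.sqrt n)⁻¹ * ·)).map (· + θ) := by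
  rw [gaussianReal_map_const_mul, gaussianReal_map_add_const]
  have h1 : (Real.sqrt n)⁻¹ * 0 + θ = θ := by ring
  have h2 : (⟨(Real.sqrt n)⁻¹ ^ 2, sq_nonneg _⟩ : ℝ≥0) * 1 = ((n : ℝ≥0))⁻¹ := by
    refine NNReal.coe_injective ?_
    show ((Real.sqrt n)⁻¹ ^ 2 * 1 : ℝ) = (((n : ℝ≥0))⁻¹ : ℝ)
    rw [mul_one,
      NNReal.coe_natCast, inv_pow, Real.sq_sqrt (by positivity)]
  rw [h1]; exact congrArg _ h2.symm

lemma gauss_Iic (n : ℕ) (hn : 0 < n) (θ x : ℝ) :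
    ((gaussianReal θ ((n : ℝ≥0))⁻¹) (Set.Iic x)).toReal =
      stdNormCDF (Real.sqrt n * (x - θ)) := by
  have hc : (0 : ℝ) < Real.sqrt n := Real.sqrt_pos.mpr (by positivity)
  rw [gaussianReal_eq_map n hn θ,
    Measure.map_apply (measurable_add_const θ) measurableSet_Iic,
    Set.preimage_add_const_Iic,
    Measure.map_apply (measurable_const_mul _) measurableSet_Iic,
    Set.preimage_const_mul_Iic₀ _ (by positivity)]
  have harg : (x - θ) / (Real.sqrt n)⁻¹ = Real.sqrt n * (x - θ) := by
    rw [inv_eq_one_div, div_div_eq_mul_div, div_one, mul_comm]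
  rw [harg]
  rfl


lemma gauss_Icc (n : ℕ) (hn : 0 < n) (θ l u : ℝ) (hlu : l ≤ u) :
    ((gaussianReal θ ((n : ℝ≥0))⁻¹) (Set.Icc l u)).toReal =
      stdNormCDF (Real.sqrt n * (u - θ)) - stdNormCDF (Real.sqrt n * (l - θ)) := by
  have hv : ((n : ℝ≥0))⁻¹ ≠ 0 := inv_ne_zero (Nat.cast_ne_zero.2 (by omega))
  set G := gaussianReal θ ((n : ℝ≥0))⁻¹ with hG
  have hsub : Set.Iio l ⊆ Set.Iic u := fun z hz => le_trans (le_of_lt hz) hlu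
  have hdiff : G (Set.Icc l u) = G (Set.Iic u) - G (Set.Iio l) := by
    rw [show Set.Icc l u = Set.Iic u \ Set.Iio l by
        ext z; simp only [Set.mem_Icc, Set.mem_diff, Set.mem_Iic, Set.mem_Iio, not_lt]; tauto,
      measure_diff hsub measurableSet_Iio.nullMeasurableSet (measure_ne_top _ _)]
  rw [hdiff, ENNReal.toReal_sub_of_le (measure_mono hsub) (measure_ne_top _ _),
    gaussianReal_Iio θ l hv, gauss_Iic n hn, gauss_Iic n hn]

lemma stdNormCDF_neg (x : ℝ) : stdNormCDF (-x) = 1 - stdNormCDF x := by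
  have hmap : (gaussianReal 0 1).map ((-1 : ℝ) * ·) = gaussianReal 0 1 := by
    rw [gaussianReal_map_const_mul]
    norm_num
  have h1 : gaussianReal 0 1 (Set.Iic (-x)) = gaussianReal 0 1 (Set.Ici x) := by
    conv_lhs => rw [← hmap]
    rw [Measure.map_apply (measurable_const_mul _) measurableSet_Iic]
    congr 1
    ext z
    simp only [Set.mem_preimage, Set.mem_Iic, Set.mem_Ici]
    constructor <;> intro <;> linarith
  have h2 : gaussianReal 0 1 (Set.Ici x) = 1 - gaussianReal 0 1 (Set.Iio x) := by
    rw [← Set.compl_Iio, measure_compl measurableSet_Iio (measure_ne_top _ _), measure_univ]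
  unfold stdNormCDF
  rw [h1, h2, gaussianReal_Iio 0 x one_ne_zero,
    ENNReal.toReal_sub_of_le prob_le_one (by simp)]
  simp


noncomputable def gcov (n : ℕ) (η a θ s : ℝ) : ℝ :=
  ((gaussianReal θ ((n : ℝ≥0))⁻¹)
    {y : ℝ | softThresh (s * η) y - s * a ≤ θ ∧ θ ≤ softThresh (s * η) y + s * a}).toReal

noncomputable def Lfun (n : ℕ) (η a s : ℝ) : ℝ :=
  stdNormCDF (Real.sqrt n * (s * (a - η))) - stdNormCDF (Real.sqrt n * (-(s * (a + η))))

lemma Lfun_nonneg (n : ℕ) {η a s : ℝ} (ha : 0 ≤ a) (hs : 0 ≤ s) : 0 ≤ Lfun n η a s := by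
  have h : Real.sqrt n * (-(s * (a + η))) ≤ Real.sqrt n * (s * (a - η)) :=
    mul_le_mul_of_nonneg_left (by nlinarith [mul_nonneg hs ha]) (Real.sqrt_nonneg (n : ℝ))
  have := stdNormCDF_mono h
  unfold Lfun; linarith

lemma gcov_le_one (n : ℕ) (η a θ s : ℝ) : gcov n η a θ s ≤ 1 := by
  unfold gcov
  have h : (gaussianReal θ ((n : ℝ≥0))⁻¹)
      {y : ℝ | softThresh (s * η) y - s * a ≤ θ ∧ θ ≤ softThresh (s * η) y + s * a} ≤ 1 :=
    prob_le_one
  calc ((gaussianReal θ ((n : ℝ≥0))⁻¹)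
      {y : ℝ | softThresh (s * η) y - s * a ≤ θ ∧ θ ≤ softThresh (s * η) y + s * a}).toReal
      ≤ (1 : ℝ≥0∞).toReal := ENNReal.toReal_mono (by simp) h
    _ = 1 := by simp

lemma gcov_eq (n : ℕ) (hn : 0 < n) {η a : ℝ} (hη : 0 < η) (ha : 0 ≤ a)
    {s : ℝ} (hs : 0 ≤ s) (θ : ℝ) :
    gcov n η a θ s =
      (if θ < -(s * a) then stdNormCDF (Real.sqrt n * (s * (a - η)))
        else stdNormCDF (Real.sqrt n * (s * (a + η)))) -
      (if s * a < θ then stdNormCDF (Real.sqrt n * (s * (η - a)))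
        else stdNormCDF (Real.sqrt n * (-(s * (a + η))))) := by
  have hsa : 0 ≤ s * a := mul_nonneg hs ha
  have hse : 0 ≤ s * η := mul_nonneg hs hη.le
  unfold gcov
  rw [sect_eq hη ha hs θ, gauss_Icc n hn θ _ _ (by split_ifs <;> linarith)]
  congr 1
  · split_ifs <;> (congr 1; ring)
  · split_ifs <;> (congr 1; ring)

lemma gcov_ge (n : ℕ) (hn : 0 < n) {η a : ℝ} (hη : 0 < η) (ha : 0 ≤ a)
    {s : ℝ} (hs : 0 ≤ s) (θ : ℝ) : Lfun n η a s ≤ gcov n η a θ s := by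
  rw [gcov_eq n hn hη ha hs θ]
  unfold Lfun
  have hsa : 0 ≤ s * a := mul_nonneg hs ha
  by_cases h1 : θ < -(s * a)
  · rw [if_pos h1, if_neg (by linarith)]
  · rw [if_neg h1]
    by_cases h2 : s * a < θ
    · rw [if_pos h2]
      have e1 : Real.sqrt n * (s * (η - a)) = -(Real.sqrt n * (s * (a - η))) := by ring
      have e2 : Real.sqrt n * (-(s * (a + η))) = -(Real.sqrt n * (s * (a + η))) := by ring
      rw [e1, e2, stdNormCDF_neg, stdNormCDF_neg]
      linarith
    · rw [if_neg h2]
      have h : Real.sqrt n * (s * (a - η)) ≤ Real.sqrt n * (s * (a + η)) :=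
        mul_le_mul_of_nonneg_left
          (mul_le_mul_of_nonneg_left (by linarith) hs) (Real.sqrt_nonneg (n : ℝ))
      have := stdNormCDF_mono h
      linarith

lemma gcov_eq_L (n : ℕ) (hn : 0 < n) {η a : ℝ} (hη : 0 < η) (ha : 0 ≤ a)
    {s : ℝ} (hs : 0 ≤ s) {θ : ℝ} (hθ : s * a < -θ) : gcov n η a θ s = Lfun n η a s := by
  have hsa : 0 ≤ s * a := mul_nonneg hs ha
  rw [gcov_eq n hn hη ha hs θ, if_pos (by linarith), if_neg (by linarith)]
  rfl

lemma measurable_softThresh_prod (η a : ℝ) :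
    Measurable fun p : ℝ × ℝ => softThresh (p.2 * η) p.1 := by
  unfold softThresh
  exact (measurable_real_sign.comp measurable_fst).mul
    ((measurable_fst.abs.sub (measurable_snd.mul_const η)).max measurable_const)

lemma measurableSet_sect (η a θ : ℝ) :
    MeasurableSet {p : ℝ × ℝ |
      softThresh (p.2 * η) p.1 - p.2 * a ≤ θ ∧ θ ≤ softThresh (p.2 * η) p.1 + p.2 * a} := by
  rw [Set.setOf_and]
  exact (measurableSet_le ((measurable_softThresh_prod η a).sub
      (measurable_snd.mul_const a)) measurable_const).inter
    (measurableSet_le measurable_const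
      ((measurable_softThresh_prod η a).add (measurable_snd.mul_const a)))

lemma measurable_gcov (n : ℕ) (η a θ : ℝ) : Measurable (gcov n η a θ) := by
  have h := measurable_measure_prodMk_right (μ := gaussianReal θ ((n : ℝ≥0))⁻¹)
    (measurableSet_sect η a θ)
  exact ENNReal.measurable_toReal.comp h


/-- Equation (finite): the infimal coverage probability of the unknown-variance interval
`E_{S,n} = [θ̃_S - σ̂ a, θ̃_S + σ̂ a]` based on the feasible soft-thresholding estimator
`θ̃_S = sign(ȳ)(|ȳ| - σ̂ η)₊` equals `T_{n-1}(√n (a - η)) - T_{n-1}(√n (-a - η))`. -/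
theorem stmt_13 (n : ℕ) (hn : 2 ≤ n) (η a : ℝ) (hη : 0 < η) (ha : 0 ≤ a) :
    (⨅ θ : ℝ, coverUV n (fun s y => softThresh (s * η) y) a θ) =
      studentCDF n (Real.sqrt n * (a - η)) - studentCDF n (Real.sqrt n * (-a - η)) := by
  have hn0 : 0 < n := by omega
  have hgam : IsProbabilityMeasure (gammaMeasure (((n : ℝ) - 1) / 2) (1 / 2)) := by
    apply isProbabilityMeasure_gammaMeasure
    · have h2 : (2 : ℝ) ≤ (n : ℝ) := by exact_mod_cast hn
      linarith
    · norm_num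
  have hsqrtm : Measurable fun q : ℝ => Real.sqrt (q / ((n : ℝ) - 1)) :=
    (Real.continuous_sqrt.comp (continuous_id.div_const _)).measurable
  haveI hμ : IsProbabilityMeasure (sigmaHatLaw n) := by
    unfold sigmaHatLaw
    exact Measure.isProbabilityMeasure_map hsqrtm.aemeasurable
  have hae : ∀ᵐ s ∂(sigmaHatLaw n), 0 ≤ s := by
    unfold sigmaHatLaw
    rw [ae_map_iff hsqrtm.aemeasurable (show MeasurableSet {x : ℝ | 0 ≤ x} from measurableSet_Ici)]
    exact ae_of_all _ fun q => Real.sqrt_nonneg _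
  -- coverage as an integral
  have hcov : ∀ θ : ℝ, coverUV n (fun s y => softThresh (s * η) y) a θ
      = ∫ s, gcov n η a θ s ∂(sigmaHatLaw n) := by
    intro θ
    have h0 : coverUV n (fun s y => softThresh (s * η) y) a θ =
        (((gaussianReal θ ((n : ℝ≥0))⁻¹).prod (sigmaHatLaw n))
          {p : ℝ × ℝ | softThresh (p.2 * η) p.1 - p.2 * a ≤ θ ∧
            θ ≤ softThresh (p.2 * η) p.1 + p.2 * a}).toReal := rfl
    rw [h0, Measure.prod_apply_symm (measurableSet_sect η a θ),
      ← integral_toReal (measurable_measure_prodMk_right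
          (measurableSet_sect η a θ)).aemeasurable
        (ae_of_all _ fun s => measure_lt_top _ _)]
    rfl
  -- integrability facts
  have hgint : ∀ θ : ℝ, Integrable (gcov n η a θ) (sigmaHatLaw n) := by
    intro θ
    refine ⟨(measurable_gcov n η a θ).aestronglyMeasurable, ?_⟩
    refine HasFiniteIntegral.of_bounded (C := 1) (ae_of_all _ fun s => ?_)
    rw [Real.norm_eq_abs,
      abs_of_nonneg (show (0:ℝ) ≤ gcov n η a θ s from ENNReal.toReal_nonneg)]
    exact gcov_le_one n η a θ s
  have hphint : ∀ x : ℝ, Integrable (fun s => stdNormCDF (s * x)) (sigmaHatLaw n) := by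
    intro x
    refine ⟨(measurable_stdNormCDF.comp (measurable_id.mul_const x)).aestronglyMeasurable, ?_⟩
    refine HasFiniteIntegral.of_bounded (C := 1) (ae_of_all _ fun s => ?_)
    rw [Real.norm_eq_abs, abs_of_nonneg (stdNormCDF_nonneg _)]
    exact stdNormCDF_le_one _
  have hLint : Integrable (fun s => Lfun n η a s) (sigmaHatLaw n) := by
    refine ((hphint (Real.sqrt n * (a - η))).sub
      (hphint (Real.sqrt n * (-a - η)))).congr (ae_of_all _ fun s => ?_)
    simp only [Pi.sub_apply]
    unfold Lfun
    congr 1 <;> (congr 1; ring)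
  have hRval : studentCDF n (Real.sqrt n * (a - η)) - studentCDF n (Real.sqrt n * (-a - η))
      = ∫ s, Lfun n η a s ∂(sigmaHatLaw n) := by
    unfold studentCDF
    rw [← integral_sub (hphint _) (hphint _)]
    refine integral_congr_ae (ae_of_all _ fun s => ?_)
    unfold Lfun
    congr 1 <;> (congr 1; ring)
  rw [hRval]
  -- lower bound
  have hlow : ∀ θ : ℝ, ∫ s, Lfun n η a s ∂(sigmaHatLaw n)
      ≤ coverUV n (fun s y => softThresh (s * η) y) a θ := by
    intro θ
    rw [hcov θ]
    exact integral_mono_ae hLint (hgint θ) (hae.mono fun s hs => gcov_ge n hn0 hη ha hs θ)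
  refine le_antisymm ?_ (le_ciInf hlow)
  -- upper bound via θ → -∞
  have hbdd : BddBelow (Set.range fun θ => coverUV n (fun s y => softThresh (s * η) y) a θ) := by
    refine ⟨0, ?_⟩
    rintro x ⟨θ, rfl⟩
    exact ENNReal.toReal_nonneg
  set A : ℕ → Set ℝ := fun k => {s : ℝ | (k : ℝ) ≤ s * a} with hA
  have hAm : ∀ k, MeasurableSet (A k) := fun k =>
    measurableSet_le measurable_const (measurable_id.mul_const a)
  have hAanti : Antitone A := by
    intro k m hkm s hsm
    simp only [hA, Set.mem_setOf_eq] at hsm ⊢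
    exact le_trans (Nat.cast_le.mpr hkm) hsm
  have hAempty : ⋂ k, A k = ∅ := by
    ext s
    simp only [Set.mem_iInter, Set.mem_setOf_eq, Set.mem_empty_iff_false, iff_false,
      not_forall, not_le, hA]
    exact exists_nat_gt (s * a)
  have htend0 : Tendsto (fun k => ((sigmaHatLaw n) (A k)).toReal) atTop (𝓝 0) := by
    have h1 := tendsto_measure_iInter_atTop (μ := sigmaHatLaw n)
      (fun k => (hAm k).nullMeasurableSet) hAanti ⟨0, measure_ne_top _ _⟩
    rw [hAempty, measure_empty] at h1
    have h2 := (ENNReal.tendsto_toReal (by simp)).comp h1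
    simpa [Function.comp_def] using h2
  have hup : ∀ k : ℕ, coverUV n (fun s y => softThresh (s * η) y) a (-(k : ℝ))
      ≤ (∫ s, Lfun n η a s ∂(sigmaHatLaw n)) + ((sigmaHatLaw n) (A k)).toReal := by
    intro k
    rw [hcov]
    have hsub : ∫ s, gcov n η a (-(k : ℝ)) s ∂(sigmaHatLaw n)
          - ∫ s, Lfun n η a s ∂(sigmaHatLaw n)
        = ∫ s, (gcov n η a (-(k : ℝ)) s - Lfun n η a s) ∂(sigmaHatLaw n) :=
      (integral_sub (hgint _) hLint).symm
    have hmono : ∫ s, (gcov n η a (-(k : ℝ)) s - Lfun n η a s) ∂(sigmaHatLaw n)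
        ≤ ∫ s, (A k).indicator (fun _ => (1 : ℝ)) s ∂(sigmaHatLaw n) := by
      refine integral_mono_ae ((hgint _).sub hLint)
        ((integrable_const (1 : ℝ)).indicator (hAm k)) (hae.mono fun s hs => ?_)
      by_cases hk : s ∈ A k
      · rw [Set.indicator_of_mem hk]
        have h1 := Lfun_nonneg n (η := η) ha hs
        have h2 := gcov_le_one n η a (-(k : ℝ)) s
        simp only []
        linarith
      · rw [Set.indicator_of_notMem hk]
        have hklt : s * a < -(-(k : ℝ)) := by
          simp only [Set.mem_setOf_eq, hA, not_le] at hk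
          simpa using hk
        have heq := gcov_eq_L n hn0 hη ha hs hklt
        simp only []
        linarith
    have hind : ∫ s, (A k).indicator (fun _ => (1 : ℝ)) s ∂(sigmaHatLaw n)
        = ((sigmaHatLaw n) (A k)).toReal := by
      rw [integral_indicator_const (1 : ℝ) (hAm k), smul_eq_mul, mul_one, measureReal_def]
    linarith
  have htendP : Tendsto (fun k : ℕ => coverUV n (fun s y => softThresh (s * η) y) a (-(k : ℝ)))
      atTop (𝓝 (∫ s, Lfun n η a s ∂(sigmaHatLaw n))) := by
    refine tendsto_of_tendsto_of_tendsto_of_le_of_le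
      (g := fun _ : ℕ => ∫ s, Lfun n η a s ∂(sigmaHatLaw n))
      (h := fun k : ℕ => (∫ s, Lfun n η a s ∂(sigmaHatLaw n)) + ((sigmaHatLaw n) (A k)).toReal)
      tendsto_const_nhds ?_ (fun k => hlow _) hup
    simpa using tendsto_const_nhds.add htend0
  exact ge_of_tendsto' htendP fun k => ciInf_le hbdd (-(k : ℝ))
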